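/- Define, for t > 0 and x ∈ ℝ, (√𝔇 q_t)(x) = ∫_ℝ |θ|^{1/2}·e^{−4π²tθ²}·e^{2πixθ} dθ (a real number, since the imaginary part integrates to zero). Then there exists a constant C > 0 such that for all t > 0 and all x ∈ ℝ, |(√𝔇 q_t)(x)| ≤ C·t^{−3/4}·(1 + x²/t)^{−3/4}. -/

import Mathlib

open MeasureTheory

/-- The `1/2`-fractional derivative of the heat kernel `q_t`, defined via the Fourier
multiplier with symbol `|θ|^{1/2}` (a real number: the imaginary part integrates to zero). -/
noncomputable def sqrtDheat (t x : ℝ) : ℝ :=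
  (∫ θ : ℝ, ((|θ| ^ ((1:ℝ)/2) * Real.exp (-4 * Real.pi ^ 2 * t * θ ^ 2) : ℝ) : ℂ) *
      Complex.exp ((2 * Real.pi * x * θ : ℝ) * Complex.I)).re

open Set

local notation "π" => Real.pi

set_option maxHeartbeats 1000000

noncomputable section SqrtDAux

/-! ### Elementary inequalities -/

lemma one_sub_exp_le' (u : ℝ) : 1 - Real.exp (-u) ≤ u := by
  have := Real.add_one_le_exp (-u); linarith

lemma exp_le_inv_one_add {u : ℝ} (hu : 0 ≤ u) : Real.exp (-u) ≤ (1+u)⁻¹ := by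
  have h := Real.add_one_le_exp u
  have h1 : (0:ℝ) < 1 + u := by linarith
  rw [Real.exp_neg]
  exact inv_anti₀ h1 (by linarith)

lemma one_add_pow_le_exp {u : ℝ} (hu : 0 ≤ u) : (1+u)^(3:ℕ) ≤ 27 * Real.exp u := by
  have h := Real.add_one_le_exp (u/3)
  have h0 : (0:ℝ) ≤ u/3 + 1 := by linarith
  have h2 : (1+u) ≤ 3*(u/3+1) := by linarith
  have hcube : (u/3+1)^(3:ℕ) ≤ (Real.exp (u/3))^(3:ℕ) := pow_le_pow_left₀ h0 h 3
  have hexp : (Real.exp (u/3))^(3:ℕ) = Real.exp u := by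
    rw [← Real.exp_nat_mul]; congr 1; push_cast; ring
  calc (1+u)^(3:ℕ) ≤ (3*(u/3+1))^(3:ℕ) := pow_le_pow_left₀ (by linarith) h2 3
  _ = 27 * (u/3+1)^(3:ℕ) := by ring
  _ ≤ 27 * (Real.exp (u/3))^(3:ℕ) := by linarith
  _ = 27 * Real.exp u := by rw [hexp]

lemma rpow_neg34 {z : ℝ} (hz : 0 ≤ z) : z ^ (-(3:ℝ)/4) = (z ^ ((3:ℝ)/4))⁻¹ := by
  rw [show (-(3:ℝ)/4) = -((3:ℝ)/4) by norm_num, Real.rpow_neg hz]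

lemma exp_decay34 {u : ℝ} (hu : 0 ≤ u) : Real.exp (-u) ≤ (1+u) ^ (-(3:ℝ)/4) := by
  have h1 : (1:ℝ) ≤ 1 + u := by linarith
  have h2 : (1+u) ^ ((3:ℝ)/4) ≤ (1+u) ^ (1:ℝ) :=
    Real.rpow_le_rpow_of_exponent_le h1 (by norm_num)
  rw [Real.rpow_one] at h2
  have h3 : (1+u) ^ ((3:ℝ)/4) ≤ Real.exp u := h2.trans (by linarith [Real.add_one_le_exp u])
  have h4 : (0:ℝ) < (1+u) ^ ((3:ℝ)/4) := Real.rpow_pos_of_pos (by linarith) _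
  rw [rpow_neg34 (by linarith : (0:ℝ) ≤ 1+u), Real.exp_neg]
  exact inv_anti₀ h4 h3

lemma mul_exp_decay34 {u : ℝ} (hu : 0 ≤ u) :
    (1+u) * Real.exp (-u) ≤ 27 * (1+u) ^ (-(3:ℝ)/4) := by
  have h1 : (1:ℝ) ≤ 1+u := by linarith
  have hpos : (0:ℝ) < (1+u) ^ ((3:ℝ)/4) := Real.rpow_pos_of_pos (by linarith) _
  have key : (1+u) * (1+u) ^ ((3:ℝ)/4) ≤ 27 * Real.exp u := by
    have h2 : (1+u) ^ ((3:ℝ)/4) ≤ (1+u) := by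
      have := Real.rpow_le_rpow_of_exponent_le h1 (show (3:ℝ)/4 ≤ 1 by norm_num)
      rwa [Real.rpow_one] at this
    have h3 : (1+u) * (1+u) ≤ (1+u)^(3:ℕ) := by nlinarith
    nlinarith [one_add_pow_le_exp hu]
  have hee : Real.exp u * Real.exp (-u) = 1 := by
    rw [← Real.exp_add]; simp
  rw [rpow_neg34 (by linarith : (0:ℝ) ≤ 1+u), ← div_eq_mul_inv, le_div_iff₀ hpos]
  nlinarith [mul_le_mul_of_nonneg_right key (Real.exp_nonneg (-u)), Real.exp_nonneg (-u)]

lemma shiftP {y c : ℝ} (hy : 0 ≤ y) (hc : 1 ≤ c) :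
    (1 + y/c) ^ (-(3:ℝ)/4) ≤ c ^ ((3:ℝ)/4) * (1+y) ^ (-(3:ℝ)/4) := by
  have hc0 : (0:ℝ) < c := by linarith
  have hyc : (0:ℝ) ≤ y / c := by positivity
  have h1 : (1+y) ≤ c * (1+y/c) := by
    rw [mul_add, mul_one, mul_div_cancel₀ _ hc0.ne']
    linarith
  have h2 : (1+y) ^ ((3:ℝ)/4) ≤ (c*(1+y/c)) ^ ((3:ℝ)/4) :=
    Real.rpow_le_rpow (by linarith) h1 (by norm_num)
  rw [Real.mul_rpow hc0.le (by linarith : (0:ℝ) ≤ 1+y/c)] at h2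
  have hA : (0:ℝ) < (1+y) ^ ((3:ℝ)/4) := Real.rpow_pos_of_pos (by linarith) _
  have hC : (0:ℝ) < c ^ ((3:ℝ)/4) := Real.rpow_pos_of_pos hc0 _
  rw [rpow_neg34 (by linarith : (0:ℝ) ≤ 1+y/c), rpow_neg34 (by linarith : (0:ℝ) ≤ 1+y)]
  have h4 : (c ^ ((3:ℝ)/4) * (1+y/c) ^ ((3:ℝ)/4))⁻¹ ≤ ((1+y)^((3:ℝ)/4))⁻¹ :=
    inv_anti₀ hA h2
  have h5 : c ^ ((3:ℝ)/4) * (c ^ ((3:ℝ)/4) * (1+y/c) ^ ((3:ℝ)/4))⁻¹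
      = ((1+y/c) ^ ((3:ℝ)/4))⁻¹ := by
    rw [mul_inv, ← mul_assoc, mul_inv_cancel₀ hC.ne', one_mul]
  rw [← h5]
  exact mul_le_mul_of_nonneg_left h4 hC.le

lemma exp_sub_exp_le {A B : ℝ} (hAB : A ≤ B) :
    Real.exp (-A) - Real.exp (-B) ≤ Real.exp (-A) * (B - A) := by
  have h := Real.add_one_le_exp (-(B-A))
  have h2 := mul_le_mul_of_nonneg_left h (Real.exp_nonneg (-A))
  have e1 : Real.exp (-A) * Real.exp (-(B-A)) = Real.exp (-B) := by
    rw [← Real.exp_add]; ring_nf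
  rw [e1] at h2
  nlinarith [h2]

lemma inv_sqrt_diff {t s : ℝ} (ht : 0 < t) (hs : 0 ≤ s) :
    (Real.sqrt t)⁻¹ - (Real.sqrt (t+s))⁻¹ ≤ s / (2*t*Real.sqrt t) := by
  have hst : (0:ℝ) < Real.sqrt t := Real.sqrt_pos.mpr ht
  have hts0 : (0:ℝ) < t + s := by linarith
  have hsts : (0:ℝ) < Real.sqrt (t+s) := Real.sqrt_pos.mpr hts0
  have hsq : Real.sqrt t ^ 2 = t := Real.sq_sqrt ht.le
  have h1 : Real.sqrt (t+s) ≤ Real.sqrt t + s/(2*Real.sqrt t) := by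
    have h2 : t + s ≤ (Real.sqrt t + s/(2*Real.sqrt t))^2 := by
      have h2ab : 2*Real.sqrt t*(s/(2*Real.sqrt t)) = s := by
        field_simp
      have hexp : (Real.sqrt t + s/(2*Real.sqrt t))^2
          = Real.sqrt t^2 + 2*Real.sqrt t*(s/(2*Real.sqrt t)) + (s/(2*Real.sqrt t))^2 := by
        ring
      rw [hexp, hsq, h2ab]
      nlinarith [sq_nonneg (s/(2*Real.sqrt t))]
    calc Real.sqrt (t+s) ≤ Real.sqrt ((Real.sqrt t + s/(2*Real.sqrt t))^2) :=
          Real.sqrt_le_sqrt h2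
    _ = Real.sqrt t + s/(2*Real.sqrt t) := Real.sqrt_sq (by positivity)
  have hts : Real.sqrt t ≤ Real.sqrt (t+s) := Real.sqrt_le_sqrt (by linarith)
  have key : (Real.sqrt t)⁻¹ - (Real.sqrt (t+s))⁻¹
      = (Real.sqrt (t+s) - Real.sqrt t) / (Real.sqrt t * Real.sqrt (t+s)) := by
    field_simp
  rw [key]
  have hden : t ≤ Real.sqrt t * Real.sqrt (t+s) := by nlinarith
  have hnum : Real.sqrt (t+s) - Real.sqrt t ≤ s/(2*Real.sqrt t) := by linarith
  calc (Real.sqrt (t+s) - Real.sqrt t) / (Real.sqrt t * Real.sqrt (t+s))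
      ≤ (s/(2*Real.sqrt t)) / t := div_le_div₀ (by positivity) hnum ht hden
  _ = s / (2*t*Real.sqrt t) := by rw [div_div]; ring_nf

/-! ### rpow glue -/

lemma glue1 {t : ℝ} (ht : 0 < t) : t * Real.sqrt t = t ^ ((3:ℝ)/2) := by
  rw [Real.sqrt_eq_rpow]
  nth_rewrite 1 [← Real.rpow_one t]
  rw [← Real.rpow_add ht]; norm_num

lemma glue2 {t : ℝ} (ht : 0 < t) : (t * Real.sqrt t)⁻¹ * t ^ ((3:ℝ)/4) = t ^ (-(3:ℝ)/4) := by
  rw [glue1 ht, ← Real.rpow_neg ht.le, ← Real.rpow_add ht]; norm_num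

lemma glue3 {t : ℝ} (ht : 0 < t) : (Real.sqrt t)⁻¹ * t ^ (-(1:ℝ)/4) = t ^ (-(3:ℝ)/4) := by
  rw [Real.sqrt_eq_rpow, ← Real.rpow_neg ht.le, ← Real.rpow_add ht]; norm_num

lemma glue4 {s : ℝ} (hs : 0 < s) : s ^ (-(5:ℝ)/4) * s = s ^ (-(1:ℝ)/4) := by
  nth_rewrite 2 [← Real.rpow_one s]
  rw [← Real.rpow_add hs]; norm_num

lemma glue5 {s : ℝ} (hs : 0 < s) : s ^ (-(5:ℝ)/4) * Real.sqrt s = s ^ (-(3:ℝ)/4) := by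
  rw [Real.sqrt_eq_rpow, ← Real.rpow_add hs]; norm_num

/-! ### The subordination constant -/

def gk (u : ℝ) : ℝ := u ^ (-(5:ℝ)/4) * (1 - Real.exp (-u))

def Kc : ℝ := ∫ u in Ioi (0:ℝ), gk u

lemma Kc_def : Kc = ∫ u in Ioi (0:ℝ), gk u := rfl

lemma gk_nonneg {u : ℝ} (hu : 0 ≤ u) : 0 ≤ gk u := by
  have h1 : Real.exp (-u) ≤ 1 := by
    calc Real.exp (-u) ≤ Real.exp 0 := Real.exp_le_exp.mpr (by linarith)
    _ = 1 := Real.exp_zero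
  exact mul_nonneg (Real.rpow_nonneg hu _) (by linarith)

lemma contOn_rpow (p : ℝ) {s : Set ℝ} (hs : ∀ x ∈ s, x ≠ 0) :
    ContinuousOn (fun x : ℝ => x ^ p) s := fun x hx =>
  (Real.continuousAt_rpow_const x p (Or.inl (hs x hx))).continuousWithinAt

lemma integrableOn_rpow_Ioc {p : ℝ} (hp : -1 < p) {c : ℝ} (hc : 0 < c) :
    IntegrableOn (fun s : ℝ => s ^ p) (Ioc 0 c) := by
  have h := intervalIntegral.intervalIntegrable_rpow' (a := (0:ℝ)) (b := c) hp
  rw [intervalIntegrable_iff] at h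
  rwa [Set.uIoc_of_le hc.le] at h

lemma integral_rpow_Ioc {p : ℝ} (hp : -1 < p) {c : ℝ} (hc : 0 < c) :
    ∫ s in Ioc (0:ℝ) c, s ^ p = c ^ (p+1) / (p+1) := by
  have h0 : (0:ℝ) < p + 1 := by linarith
  rw [← intervalIntegral.integral_of_le hc.le, integral_rpow (Or.inl hp),
    Real.zero_rpow h0.ne']
  ring

lemma integrableOn_gk : IntegrableOn gk (Ioi (0:ℝ)) := by
  have h1 : IntegrableOn gk (Ioc (0:ℝ) 1) := by
    apply Integrable.mono' (integrableOn_rpow_Ioc (p := -(1:ℝ)/4) (by norm_num) one_pos)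
    · apply ContinuousOn.aestronglyMeasurable ?_ measurableSet_Ioc
      apply ContinuousOn.mul (contOn_rpow _ (fun x hx => (hx.1).ne'))
      exact (continuous_const.sub (Real.continuous_exp.comp continuous_neg)).continuousOn
    · filter_upwards [ae_restrict_mem measurableSet_Ioc] with u hu
      have hu0 : (0:ℝ) < u := hu.1
      rw [Real.norm_eq_abs, abs_of_nonneg (gk_nonneg hu0.le)]
      calc gk u ≤ u ^ (-(5:ℝ)/4) * u :=
            mul_le_mul_of_nonneg_left (one_sub_exp_le' u) (Real.rpow_nonneg hu0.le _)
      _ = u ^ (-(1:ℝ)/4) := by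
            nth_rewrite 2 [← Real.rpow_one u]
            rw [← Real.rpow_add hu0]; norm_num
  have h2 : IntegrableOn gk (Ioi (1:ℝ)) := by
    apply Integrable.mono' (integrableOn_Ioi_rpow_of_lt (by norm_num : -(5:ℝ)/4 < -1) one_pos)
    · apply ContinuousOn.aestronglyMeasurable ?_ measurableSet_Ioi
      apply ContinuousOn.mul (contOn_rpow _ (fun x hx => (lt_trans one_pos hx).ne'))
      exact (continuous_const.sub (Real.continuous_exp.comp continuous_neg)).continuousOn
    · filter_upwards [ae_restrict_mem measurableSet_Ioi] with u hu
      have hu0 : (0:ℝ) < u := lt_trans one_pos hu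
      rw [Real.norm_eq_abs, abs_of_nonneg (gk_nonneg hu0.le)]
      have h1e : Real.exp (-u) ≤ 1 := by
        calc Real.exp (-u) ≤ Real.exp 0 := Real.exp_le_exp.mpr (by linarith)
        _ = 1 := Real.exp_zero
      calc gk u ≤ u ^ (-(5:ℝ)/4) * 1 :=
            mul_le_mul_of_nonneg_left (by linarith [Real.exp_pos (-u)])
              (Real.rpow_nonneg hu0.le _)
      _ = u ^ (-(5:ℝ)/4) := by rw [mul_one]
  have h := h1.union h2
  rwa [Ioc_union_Ioi_eq_Ioi (by norm_num : (0:ℝ) ≤ 1)] at h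

lemma Kc_pos : 0 < Kc := by
  have hsub : IntegrableOn gk (Ioc (1:ℝ) 2) :=
    integrableOn_gk.mono_set (fun u hu => lt_trans one_pos hu.1)
  set c : ℝ := (2:ℝ) ^ (-(5:ℝ)/4) * (1 - Real.exp (-1)) with hc
  have hcpos : 0 < c := by
    apply mul_pos (Real.rpow_pos_of_pos two_pos _)
    have : Real.exp (-1) < 1 := by
      calc Real.exp (-1) < Real.exp 0 := Real.exp_lt_exp.mpr (by norm_num)
      _ = 1 := Real.exp_zero
    linarith
  have hlow : ∀ u ∈ Ioc (1:ℝ) 2, c ≤ gk u := by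
    intro u hu
    have hu1 : (1:ℝ) ≤ u := hu.1.le
    have hu0 : (0:ℝ) < u := lt_of_lt_of_le one_pos hu1
    have e1 : (2:ℝ) ^ (-(5:ℝ)/4) ≤ u ^ (-(5:ℝ)/4) := by
      rw [show (-(5:ℝ)/4) = -((5:ℝ)/4) by norm_num, Real.rpow_neg (by norm_num : (0:ℝ) ≤ 2),
        Real.rpow_neg hu0.le]
      exact inv_anti₀ (Real.rpow_pos_of_pos hu0 _)
        (Real.rpow_le_rpow hu0.le hu.2 (by norm_num))
    have e2 : 1 - Real.exp (-1) ≤ 1 - Real.exp (-u) := by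
      have : Real.exp (-u) ≤ Real.exp (-1) := Real.exp_le_exp.mpr (by linarith)
      linarith
    have e3 : (0:ℝ) ≤ 1 - Real.exp (-1) := by
      have : Real.exp (-1) ≤ Real.exp 0 := Real.exp_le_exp.mpr (by norm_num)
      rw [Real.exp_zero] at this; linarith
    exact mul_le_mul e1 e2 e3 (Real.rpow_nonneg hu0.le _)
  have hconst : IntegrableOn (fun _ : ℝ => c) (Ioc (1:ℝ) 2) :=
    integrableOn_const (by rw [Real.volume_Ioc]; exact ENNReal.ofReal_ne_top)
  have hmono := setIntegral_mono_on hconst hsub measurableSet_Ioc hlow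
  have hval : ∫ _ in Ioc (1:ℝ) 2, c = c := by
    rw [setIntegral_const, Real.volume_real_Ioc]
    norm_num
  have hfin : c ≤ ∫ u in Ioc (1:ℝ) 2, gk u := by rw [← hval]; exact hmono
  have hlast : ∫ u in Ioc (1:ℝ) 2, gk u ≤ Kc := by
    apply setIntegral_mono_set integrableOn_gk
    · filter_upwards [ae_restrict_mem measurableSet_Ioi] with u hu
      exact gk_nonneg (le_of_lt hu)
    · exact HasSubset.Subset.eventuallyLE (fun u hu => lt_trans one_pos hu.1)
  linarith

lemma gk_scale {l : ℝ} (hl : 0 < l) :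
    ∫ s in Ioi (0:ℝ), s ^ (-(5:ℝ)/4) * (1 - Real.exp (-(l*s))) = l ^ ((1:ℝ)/4) * Kc := by
  have h := MeasureTheory.integral_comp_mul_left_Ioi gk 0 hl
  simp only [mul_zero, smul_eq_mul] at h
  have h2 : ∫ s in Ioi (0:ℝ), gk (l*s)
      = l ^ (-(5:ℝ)/4) * ∫ s in Ioi (0:ℝ), s ^ (-(5:ℝ)/4) * (1 - Real.exp (-(l*s))) := by
    rw [← integral_const_mul]
    apply setIntegral_congr_fun measurableSet_Ioi
    intro s hs
    show gk (l*s) = _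
    unfold gk
    rw [Real.mul_rpow hl.le (le_of_lt hs)]
    ring
  rw [h2] at h
  set I := ∫ s in Ioi (0:ℝ), s ^ (-(5:ℝ)/4) * (1 - Real.exp (-(l*s))) with hI
  have e1 : l ^ ((5:ℝ)/4) * (l ^ (-(5:ℝ)/4) * I) = I := by
    rw [← mul_assoc, ← Real.rpow_add hl]; norm_num
  calc I = l ^ ((5:ℝ)/4) * (l ^ (-(5:ℝ)/4) * I) := e1.symm
  _ = l ^ ((5:ℝ)/4) * (l⁻¹ * Kc) := by rw [h, Kc_def]
  _ = l ^ ((1:ℝ)/4) * Kc := by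
      rw [← Real.rpow_neg_one l, ← mul_assoc, ← Real.rpow_add hl]; norm_num

lemma symbol {t : ℝ} (ht : 0 < t) (θ : ℝ) :
    ∫ s in Ioi (0:ℝ), s ^ (-(5:ℝ)/4) *
        (Real.exp (-4*π^2*t*θ^2) - Real.exp (-4*π^2*(t+s)*θ^2))
      = (4*π^2) ^ ((1:ℝ)/4) * Kc * (|θ| ^ ((1:ℝ)/2) * Real.exp (-4*π^2*t*θ^2)) := by
  rcases eq_or_ne θ 0 with h0 | h0
  · subst h0
    simp [Real.zero_rpow (show ((1:ℝ)/2) ≠ 0 by norm_num)]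
  · have hl : (0:ℝ) < 4*π^2*θ^2 := by positivity
    have key : ∀ s ∈ Ioi (0:ℝ), s ^ (-(5:ℝ)/4) *
          (Real.exp (-4*π^2*t*θ^2) - Real.exp (-4*π^2*(t+s)*θ^2))
        = Real.exp (-4*π^2*t*θ^2) * (s ^ (-(5:ℝ)/4) * (1 - Real.exp (-(4*π^2*θ^2*s)))) := by
      intro s _
      have harg : (-4*π^2*(t+s)*θ^2) = (-4*π^2*t*θ^2) + (-(4*π^2*θ^2*s)) := by ring
      rw [harg, Real.exp_add]
      ring
    rw [setIntegral_congr_fun measurableSet_Ioi key, integral_const_mul, gk_scale hl]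
    have e2 : (4*π^2*θ^2) ^ ((1:ℝ)/4) = (4*π^2) ^ ((1:ℝ)/4) * |θ| ^ ((1:ℝ)/2) := by
      rw [Real.mul_rpow (by positivity) (sq_nonneg θ)]
      congr 1
      have h1 : (θ:ℝ)^2 = |θ| ^ (2:ℝ) := by
        rw [show (2:ℝ) = ((2:ℕ):ℝ) by norm_num, Real.rpow_natCast, sq_abs]
      rw [h1, ← Real.rpow_mul (abs_nonneg θ)]
      norm_num
    rw [e2]; ring

/-! ### Gaussian kernel -/

def c0 : ℝ := Real.sqrt (π/(4*π^2))

def Qk (τ x : ℝ) : ℝ := Real.sqrt (π/(4*π^2*τ)) * Real.exp (-(x^2)/(4*τ))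

lemma c0_nonneg : 0 ≤ c0 := Real.sqrt_nonneg _

lemma c0_le_one : c0 ≤ 1 := by
  unfold c0
  rw [Real.sqrt_le_one]
  rw [div_le_one (by positivity)]
  nlinarith [Real.pi_gt_three]

lemma sqrt_piv {τ : ℝ} (hτ : 0 < τ) :
    Real.sqrt (π/(4*π^2*τ)) = c0 * (Real.sqrt τ)⁻¹ := by
  unfold c0
  have harg : π/(4*π^2*τ) = (π/(4*π^2)) * τ⁻¹ := by
    rw [← div_div, div_eq_mul_inv]
  rw [harg, Real.sqrt_mul (by positivity), Real.sqrt_inv]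

lemma Qk_nonneg (τ x : ℝ) : 0 ≤ Qk τ x :=
  mul_nonneg (Real.sqrt_nonneg _) (Real.exp_nonneg _)

lemma Qk_eq {τ : ℝ} (hτ : 0 < τ) (x : ℝ) :
    Qk τ x = c0 * (Real.sqrt τ)⁻¹ * Real.exp (-(x^2)/(4*τ)) := by
  unfold Qk
  rw [sqrt_piv hτ]

/-! ### Pointwise kernel estimates -/

lemma region1pt {t s x : ℝ} (ht : 0 < t) (hs : 0 < s) (hst : s ≤ t) :
    |Qk t x - Qk (t+s) x| ≤ 432 * s * (t*Real.sqrt t)⁻¹ * (1 + x^2/t) ^ (-(3:ℝ)/4) := by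
  have hts : (0:ℝ) < t + s := by linarith
  have hst0 : (0:ℝ) < Real.sqrt t := Real.sqrt_pos.mpr ht
  have hsts : (0:ℝ) < Real.sqrt (t+s) := Real.sqrt_pos.mpr hts
  set A := (Real.sqrt t)⁻¹ with hA_def
  set B := (Real.sqrt (t+s))⁻¹ with hB_def
  set Et := Real.exp (-(x^2)/(4*t)) with hEt_def
  set Ets := Real.exp (-(x^2)/(4*(t+s))) with hEts_def
  set D := Real.exp (-(x^2)/(8*t)) with hD_def
  have hA : 0 < A := by rw [hA_def]; positivity
  have hB : 0 < B := by rw [hB_def]; positivity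
  have hBA : B ≤ A := by
    rw [hA_def, hB_def]
    exact inv_anti₀ hst0 (Real.sqrt_le_sqrt (by linarith))
  have hABle : A - B ≤ s/(2*t*Real.sqrt t) := inv_sqrt_diff ht hs.le
  have hEt_pos : 0 < Et := Real.exp_pos _
  have hEts_pos : 0 < Ets := Real.exp_pos _
  have hDiv1 : x^2/(4*(t+s)) ≤ x^2/(4*t) :=
    div_le_div_of_nonneg_left (sq_nonneg x) (by linarith) (by linarith)
  have hDiv2 : x^2/(8*t) ≤ x^2/(4*t) :=
    div_le_div_of_nonneg_left (sq_nonneg x) (by linarith) (by linarith)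
  have hDiv3 : x^2/(8*t) ≤ x^2/(4*(t+s)) :=
    div_le_div_of_nonneg_left (sq_nonneg x) (by linarith) (by linarith)
  have hEtEts : Et ≤ Ets := by
    rw [hEt_def, hEts_def, neg_div, neg_div]
    exact Real.exp_le_exp.mpr (neg_le_neg hDiv1)
  have hEtD : Et ≤ D := by
    rw [hEt_def, hD_def, neg_div, neg_div]
    exact Real.exp_le_exp.mpr (neg_le_neg hDiv2)
  have hEtsD : Ets ≤ D := by
    rw [hEts_def, hD_def, neg_div, neg_div]
    exact Real.exp_le_exp.mpr (neg_le_neg hDiv3)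
  have hD_pos : 0 < D := Real.exp_pos _
  have hdiff : Ets - Et ≤ D * (x^2*s/(4*t^2)) := by
    have h1 : Ets - Et ≤ Ets * ((x^2/(4*t)) - (x^2/(4*(t+s)))) := by
      have := exp_sub_exp_le (A := x^2/(4*(t+s))) (B := x^2/(4*t)) hDiv1
      rw [hEt_def, hEts_def, neg_div, neg_div]
      exact this
    have hid : (x^2/(4*t)) - (x^2/(4*(t+s))) = x^2*s/(4*t*(t+s)) := by
      field_simp
      ring
    have h2 : (x^2/(4*t)) - (x^2/(4*(t+s))) ≤ x^2*s/(4*t^2) := by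
      rw [hid]
      apply div_le_div_of_nonneg_left (by positivity) (by positivity)
      nlinarith
    have h3 : (0:ℝ) ≤ (x^2/(4*t)) - (x^2/(4*(t+s))) := by
      rw [hid]; positivity
    calc Ets - Et ≤ Ets * ((x^2/(4*t)) - (x^2/(4*(t+s)))) := h1
    _ ≤ D * (x^2*s/(4*t^2)) := mul_le_mul hEtsD h2 h3 hD_pos.le
  have habs : |A*Et - B*Ets| ≤ (s/(2*t*Real.sqrt t))*D + A*(D*(x^2*s/(4*t^2))) := by
    have hterm1 : (0:ℝ) ≤ (s/(2*t*Real.sqrt t))*D := by positivity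
    have hterm2 : (0:ℝ) ≤ A*(D*(x^2*s/(4*t^2))) := by positivity
    apply abs_le.mpr
    constructor
    · have l1 : B*(Ets-Et) ≤ A*(Ets-Et) :=
        mul_le_mul_of_nonneg_right hBA (sub_nonneg.mpr hEtEts)
      have l2 : (0:ℝ) ≤ (A-B)*Et := mul_nonneg (sub_nonneg.mpr hBA) hEt_pos.le
      have l3 : A*(Ets-Et) ≤ A*(D*(x^2*s/(4*t^2))) :=
        mul_le_mul_of_nonneg_left hdiff hA.le
      nlinarith [l1, l2, l3]
    · have u1 : (0:ℝ) ≤ B*(Ets-Et) := mul_nonneg hB.le (sub_nonneg.mpr hEtEts)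
      have u2 : (A-B)*Et ≤ (s/(2*t*Real.sqrt t))*Et :=
        mul_le_mul_of_nonneg_right hABle hEt_pos.le
      have u3 : (s/(2*t*Real.sqrt t))*Et ≤ (s/(2*t*Real.sqrt t))*D :=
        mul_le_mul_of_nonneg_left hEtD (by positivity)
      nlinarith [u1, u2, u3]
  have hQd : Qk t x - Qk (t+s) x = c0 * (A*Et - B*Ets) := by
    rw [Qk_eq ht, Qk_eq hts]
    ring
  rw [hQd, abs_mul, abs_of_nonneg c0_nonneg]
  have hsum_eq : (s/(2*t*Real.sqrt t))*D + A*(D*(x^2*s/(4*t^2)))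
      = s * (t*Real.sqrt t)⁻¹ * (D * (1/2 + x^2/(4*t))) := by
    rw [hA_def]
    field_simp
  have hdecay : D * (1/2 + x^2/(4*t)) ≤ 432 * (1 + x^2/t) ^ (-(3:ℝ)/4) := by
    have hu0 : (0:ℝ) ≤ x^2/(8*t) := by positivity
    have key27 := mul_exp_decay34 (u := x^2/(8*t)) hu0
    have hshift := shiftP (y := x^2/t) (c := 8) (by positivity) (by norm_num)
    have hyc : (x^2/t)/8 = x^2/(8*t) := by ring
    rw [hyc] at hshift
    have h85 : (8:ℝ) ^ ((3:ℝ)/4) ≤ 8 := by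
      have := Real.rpow_le_rpow_of_exponent_le (show (1:ℝ) ≤ 8 by norm_num)
        (show (3:ℝ)/4 ≤ 1 by norm_num)
      rwa [Real.rpow_one] at this
    have hP : (0:ℝ) ≤ (1+x^2/t) ^ (-(3:ℝ)/4) := Real.rpow_nonneg (by positivity) _
    have hDu : D = Real.exp (-(x^2/(8*t))) := by rw [hD_def, neg_div]
    have h2 : 1/2 + x^2/(4*t) ≤ 2*(1+x^2/(8*t)) := by
      have : x^2/(4*t) = 2*(x^2/(8*t)) := by ring
      rw [this]
      linarith [hu0]
    have hexpn : (0:ℝ) ≤ Real.exp (-(x^2/(8*t))) := Real.exp_nonneg _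
    have hstep : D * (1/2 + x^2/(4*t)) ≤ 2*((1+x^2/(8*t)) * Real.exp (-(x^2/(8*t)))) := by
      rw [hDu]
      nlinarith [mul_le_mul_of_nonneg_left h2 hexpn]
    have hmid : (1+x^2/(8*t)) ^ (-(3:ℝ)/4) ≤ 8 * (1+x^2/t) ^ (-(3:ℝ)/4) := by
      calc (1+x^2/(8*t)) ^ (-(3:ℝ)/4) ≤ 8 ^ ((3:ℝ)/4) * (1+x^2/t) ^ (-(3:ℝ)/4) := hshift
      _ ≤ 8 * (1+x^2/t) ^ (-(3:ℝ)/4) := mul_le_mul_of_nonneg_right h85 hP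
    calc D * (1/2 + x^2/(4*t)) ≤ 2*((1+x^2/(8*t)) * Real.exp (-(x^2/(8*t)))) := hstep
    _ ≤ 2*(27 * (1+x^2/(8*t)) ^ (-(3:ℝ)/4)) := by linarith [key27]
    _ = 54 * (1+x^2/(8*t)) ^ (-(3:ℝ)/4) := by ring
    _ ≤ 54 * (8 * (1+x^2/t) ^ (-(3:ℝ)/4)) := by linarith [hmid]
    _ = 432 * (1 + x^2/t) ^ (-(3:ℝ)/4) := by ring
  calc c0 * |A*Et - B*Ets|
      ≤ 1 * ((s/(2*t*Real.sqrt t))*D + A*(D*(x^2*s/(4*t^2)))) :=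
        mul_le_mul c0_le_one habs (abs_nonneg _) zero_le_one
  _ = s * (t*Real.sqrt t)⁻¹ * (D * (1/2 + x^2/(4*t))) := by rw [one_mul, hsum_eq]
  _ ≤ s * (t*Real.sqrt t)⁻¹ * (432 * (1 + x^2/t) ^ (-(3:ℝ)/4)) := by
        apply mul_le_mul_of_nonneg_left hdecay (by positivity)
  _ = 432 * s * (t*Real.sqrt t)⁻¹ * (1 + x^2/t) ^ (-(3:ℝ)/4) := by ring

lemma QtP {t x : ℝ} (ht : 0 < t) :
    Qk t x ≤ 4 * ((Real.sqrt t)⁻¹ * (1+x^2/t) ^ (-(3:ℝ)/4)) := by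
  have hst0 : (0:ℝ) < Real.sqrt t := Real.sqrt_pos.mpr ht
  have hu0 : (0:ℝ) ≤ x^2/(4*t) := by positivity
  have h1 : Real.exp (-(x^2)/(4*t)) ≤ (1+x^2/(4*t)) ^ (-(3:ℝ)/4) := by
    rw [neg_div]
    exact exp_decay34 hu0
  have hshift := shiftP (y := x^2/t) (c := 4) (by positivity) (by norm_num)
  have hyc : (x^2/t)/4 = x^2/(4*t) := by ring
  rw [hyc] at hshift
  have h45 : (4:ℝ) ^ ((3:ℝ)/4) ≤ 4 := by
    have := Real.rpow_le_rpow_of_exponent_le (show (1:ℝ) ≤ 4 by norm_num)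
      (show (3:ℝ)/4 ≤ 1 by norm_num)
    rwa [Real.rpow_one] at this
  have hP : (0:ℝ) ≤ (1+x^2/t) ^ (-(3:ℝ)/4) := Real.rpow_nonneg (by positivity) _
  have h2 : Real.exp (-(x^2)/(4*t)) ≤ 4 * (1+x^2/t) ^ (-(3:ℝ)/4) := by
    calc Real.exp (-(x^2)/(4*t)) ≤ (1+x^2/(4*t)) ^ (-(3:ℝ)/4) := h1
    _ ≤ 4 ^ ((3:ℝ)/4) * (1+x^2/t) ^ (-(3:ℝ)/4) := hshift
    _ ≤ 4 * (1+x^2/t) ^ (-(3:ℝ)/4) := mul_le_mul_of_nonneg_right h45 hP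
  rw [Qk_eq ht]
  calc c0 * (Real.sqrt t)⁻¹ * Real.exp (-(x^2)/(4*t))
      ≤ 1 * (Real.sqrt t)⁻¹ * (4 * (1+x^2/t) ^ (-(3:ℝ)/4)) := by
        apply mul_le_mul (mul_le_mul_of_nonneg_right c0_le_one (by positivity)) h2
          (Real.exp_nonneg _)
        positivity
  _ = 4 * ((Real.sqrt t)⁻¹ * (1+x^2/t) ^ (-(3:ℝ)/4)) := by ring

lemma region2pt {t s x : ℝ} (ht : 0 < t) (hts : t < s) :
    Qk (t+s) x ≤ 8 * Real.sqrt s / (4*s + x^2) := by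
  have hs : (0:ℝ) < s := ht.trans hts
  have hts0 : (0:ℝ) < t + s := by linarith
  have hsts : (0:ℝ) < Real.sqrt (t+s) := Real.sqrt_pos.mpr hts0
  have hss : (0:ℝ) < Real.sqrt s := Real.sqrt_pos.mpr hs
  have hu0 : (0:ℝ) ≤ x^2/(4*(t+s)) := by positivity
  have h1 : Real.exp (-(x^2)/(4*(t+s))) ≤ (1+x^2/(4*(t+s)))⁻¹ := by
    rw [neg_div]
    exact exp_le_inv_one_add hu0
  have h2 : (1+x^2/(4*(t+s)))⁻¹ = 4*(t+s)/(4*(t+s)+x^2) := by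
    rw [eq_div_iff (by positivity)]
    field_simp
  have h3 : Qk (t+s) x ≤ (Real.sqrt (t+s))⁻¹ * (4*(t+s)/(4*(t+s)+x^2)) := by
    rw [Qk_eq hts0, ← h2]
    calc c0 * (Real.sqrt (t+s))⁻¹ * Real.exp (-(x^2)/(4*(t+s)))
        ≤ 1 * (Real.sqrt (t+s))⁻¹ * (1+x^2/(4*(t+s)))⁻¹ := by
          apply mul_le_mul (mul_le_mul_of_nonneg_right c0_le_one (by positivity)) h1
            (Real.exp_nonneg _)
          positivity
    _ = (Real.sqrt (t+s))⁻¹ * (1+x^2/(4*(t+s)))⁻¹ := by ring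
  have h4 : (Real.sqrt (t+s))⁻¹ * (4*(t+s)/(4*(t+s)+x^2))
      = 4*Real.sqrt (t+s)/(4*(t+s)+x^2) := by
    have hsq : Real.sqrt (t+s) * Real.sqrt (t+s) = t+s := Real.mul_self_sqrt hts0.le
    field_simp
    nlinarith [hsq]
  have h5 : Real.sqrt (t+s) ≤ 2*Real.sqrt s := by
    have ha : Real.sqrt (t+s) ≤ Real.sqrt (4*s) := Real.sqrt_le_sqrt (by linarith)
    have hb : Real.sqrt (4*s) = 2*Real.sqrt s := by
      rw [show (4:ℝ)*s = 2^2*s by norm_num, Real.sqrt_mul (by norm_num), Real.sqrt_sq (by norm_num)]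
    linarith [ha, hb.le, hb.ge]
  have h6 : 4*Real.sqrt (t+s)/(4*(t+s)+x^2) ≤ 8*Real.sqrt s/(4*s+x^2) := by
    apply div_le_div₀ (by positivity) (by linarith) (by positivity) (by nlinarith)
  calc Qk (t+s) x ≤ (Real.sqrt (t+s))⁻¹ * (4*(t+s)/(4*(t+s)+x^2)) := h3
  _ = 4*Real.sqrt (t+s)/(4*(t+s)+x^2) := h4
  _ ≤ 8*Real.sqrt s/(4*s+x^2) := h6

end SqrtDAux
noncomputable section SqrtDAux2

/-! ### The tail integral constant -/

def K2 : ℝ := ∫ u in Ioi (0:ℝ), u ^ (-(3:ℝ)/4) / (4*u+1)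

lemma K2_def : K2 = ∫ u in Ioi (0:ℝ), u ^ (-(3:ℝ)/4) / (4*u+1) := rfl

lemma hden_cont (x2 : ℝ) : Continuous (fun s : ℝ => 4*s + x2) := by
  exact (continuous_const.mul continuous_id).add continuous_const

lemma integrableOn_hh_Ioi {x2 c : ℝ} (hx2 : 0 ≤ x2) (hc : 0 < c) :
    IntegrableOn (fun s : ℝ => s ^ (-(3:ℝ)/4) / (4*s+x2)) (Ioi c) := by
  apply Integrable.mono'
    ((integrableOn_Ioi_rpow_of_lt (by norm_num : -(7:ℝ)/4 < -1) hc).const_mul (1/4))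
  · apply ContinuousOn.aestronglyMeasurable ?_ measurableSet_Ioi
    apply ContinuousOn.div (contOn_rpow _ (fun s hs => (hc.trans hs).ne'))
      (hden_cont x2).continuousOn
    intro s hs
    have h1 : 0 < s := hc.trans hs
    have := sq_nonneg x2
    nlinarith
  · filter_upwards [ae_restrict_mem measurableSet_Ioi] with s hs
    have hs0 : (0:ℝ) < s := hc.trans hs
    have hpos : (0:ℝ) < 4*s + x2 := by nlinarith
    rw [Real.norm_eq_abs,
      abs_of_nonneg (div_nonneg (Real.rpow_nonneg hs0.le _) hpos.le)]
    have hq : (1:ℝ)/4 * s ^ (-(7:ℝ)/4) = s ^ (-(3:ℝ)/4) / (4*s) := by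
      rw [show (-(7:ℝ)/4) = (-(3:ℝ)/4) + (-1:ℝ) by norm_num, Real.rpow_add hs0,
        Real.rpow_neg_one]
      field_simp
    rw [hq]
    exact div_le_div_of_nonneg_left (Real.rpow_nonneg hs0.le _) (by linarith) (by linarith)

lemma integrableOn_hh_Ioc {x2 c : ℝ} (hx2 : 0 < x2) (hc : 0 < c) :
    IntegrableOn (fun s : ℝ => s ^ (-(3:ℝ)/4) / (4*s+x2)) (Ioc 0 c) := by
  apply Integrable.mono' ((integrableOn_rpow_Ioc (p := -(3:ℝ)/4) (by norm_num) hc).const_mul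
    (x2⁻¹))
  · apply ContinuousOn.aestronglyMeasurable ?_ measurableSet_Ioc
    apply ContinuousOn.div (contOn_rpow _ (fun s hs => hs.1.ne'))
      (hden_cont x2).continuousOn
    intro s hs
    have h1 : 0 < s := hs.1
    nlinarith
  · filter_upwards [ae_restrict_mem measurableSet_Ioc] with s hs
    have hs0 : (0:ℝ) < s := hs.1
    have hpos : (0:ℝ) < 4*s + x2 := by nlinarith
    rw [Real.norm_eq_abs,
      abs_of_nonneg (div_nonneg (Real.rpow_nonneg hs0.le _) hpos.le)]
    have hq : x2⁻¹ * s ^ (-(3:ℝ)/4) = s ^ (-(3:ℝ)/4) / x2 := by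
      rw [div_eq_mul_inv]; ring
    rw [hq]
    exact div_le_div_of_nonneg_left (Real.rpow_nonneg hs0.le _) hx2 (by linarith)

lemma integrableOn_hh_Ioi0 {x2 : ℝ} (hx2 : 0 < x2) :
    IntegrableOn (fun s : ℝ => s ^ (-(3:ℝ)/4) / (4*s+x2)) (Ioi 0) := by
  have h := (integrableOn_hh_Ioc hx2 one_pos).union (integrableOn_hh_Ioi hx2.le one_pos)
  rwa [Ioc_union_Ioi_eq_Ioi (by norm_num : (0:ℝ) ≤ 1)] at h

lemma integrableOn_K2 : IntegrableOn (fun u : ℝ => u ^ (-(3:ℝ)/4) / (4*u+1)) (Ioi 0) :=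
  integrableOn_hh_Ioi0 one_pos

lemma K2_nonneg : 0 ≤ K2 := by
  apply setIntegral_nonneg measurableSet_Ioi
  intro u hu
  have hu0 : (0:ℝ) < u := hu
  exact div_nonneg (Real.rpow_nonneg hu0.le _) (by nlinarith)

lemma Jscale {x : ℝ} (hx : 0 < x^2) :
    ∫ s in Ioi (0:ℝ), s ^ (-(3:ℝ)/4) / (4*s+x^2) = (x^2) ^ (-(3:ℝ)/4) * K2 := by
  have h := MeasureTheory.integral_comp_mul_left_Ioi
    (fun s => s ^ (-(3:ℝ)/4) / (4*s+x^2)) 0 hx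
  simp only [mul_zero, smul_eq_mul] at h
  have h2 : ∀ s ∈ Ioi (0:ℝ), (x^2*s) ^ (-(3:ℝ)/4) / (4*(x^2*s)+x^2)
      = (x^2) ^ (-(3:ℝ)/4) * (x^2)⁻¹ * (s ^ (-(3:ℝ)/4) / (4*s+1)) := by
    intro s hs
    have hs0 : (0:ℝ) < s := hs
    rw [Real.mul_rpow hx.le hs0.le]
    have hden : 4*(x^2*s)+x^2 = x^2*(4*s+1) := by ring
    rw [hden]
    have h4s : (0:ℝ) < 4*s+1 := by linarith
    field_simp
  rw [setIntegral_congr_fun measurableSet_Ioi h2, integral_const_mul, ← K2_def] at h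
  have hxne : (x^2 : ℝ) ≠ 0 := hx.ne'
  have hx0 : x ≠ 0 := fun h0 => hxne (by rw [h0]; ring)
  have hgoal : ∫ s in Ioi (0:ℝ), s ^ (-(3:ℝ)/4) / (4*s+x^2)
      = x^2 * ((x^2) ^ (-(3:ℝ)/4) * (x^2)⁻¹ * K2) := by
    rw [h]
    field_simp
  rw [hgoal]
  field_simp

lemma rpow34_y_le {y : ℝ} (hy : 1 ≤ y) :
    y ^ (-(3:ℝ)/4) ≤ 2 * (1+y) ^ (-(3:ℝ)/4) := by
  have hy0 : (0:ℝ) < y := by linarith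
  have h1p : (0:ℝ) < (1+y) ^ ((3:ℝ)/4) := Real.rpow_pos_of_pos (by linarith) _
  have hyp : (0:ℝ) < y ^ ((3:ℝ)/4) := Real.rpow_pos_of_pos hy0 _
  have h23 : (2:ℝ) ^ ((3:ℝ)/4) ≤ 2 := by
    have := Real.rpow_le_rpow_of_exponent_le (show (1:ℝ) ≤ 2 by norm_num)
      (show (3:ℝ)/4 ≤ 1 by norm_num)
    rwa [Real.rpow_one] at this
  have h1 : (1+y) ^ ((3:ℝ)/4) ≤ 2 ^ ((3:ℝ)/4) * y ^ ((3:ℝ)/4) := by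
    rw [← Real.mul_rpow (by norm_num) hy0.le]
    exact Real.rpow_le_rpow (by linarith) (by linarith) (by norm_num)
  have h2 : (1+y) ^ ((3:ℝ)/4) ≤ 2 * y ^ ((3:ℝ)/4) := by nlinarith
  have h4 : ((2:ℝ)*y^((3:ℝ)/4))⁻¹ ≤ ((1+y)^((3:ℝ)/4))⁻¹ := inv_anti₀ h1p h2
  have h5 : (y^((3:ℝ)/4))⁻¹ = 2*((2:ℝ)*y^((3:ℝ)/4))⁻¹ := by
    rw [mul_inv, ← mul_assoc, mul_inv_cancel₀ two_ne_zero, one_mul]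
  rw [rpow_neg34 hy0.le, rpow_neg34 (by linarith : (0:ℝ) ≤ 1+y), h5]
  exact mul_le_mul_of_nonneg_left h4 (by norm_num)

lemma Jbound {t x : ℝ} (ht : 0 < t) :
    ∫ s in Ioi t, s ^ (-(3:ℝ)/4) / (4*s+x^2)
      ≤ (1 + 2*K2) * (t ^ (-(3:ℝ)/4) * (1+x^2/t) ^ (-(3:ℝ)/4)) := by
  have hT : (0:ℝ) < t ^ (-(3:ℝ)/4) := Real.rpow_pos_of_pos ht _
  have hP : (0:ℝ) < (1+x^2/t) ^ (-(3:ℝ)/4) := Real.rpow_pos_of_pos (by positivity) _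
  have hint : IntegrableOn (fun s : ℝ => s ^ (-(3:ℝ)/4) / (4*s+x^2)) (Ioi t) :=
    integrableOn_hh_Ioi (sq_nonneg x) ht
  rcases le_or_gt (x^2) t with hxt | hxt
  · have hmaj : IntegrableOn (fun s : ℝ => (1/4) * s ^ (-(7:ℝ)/4)) (Ioi t) :=
      (integrableOn_Ioi_rpow_of_lt (by norm_num : -(7:ℝ)/4 < -1) ht).const_mul _
    have hle := setIntegral_mono_on hint hmaj measurableSet_Ioi ?ptw
    case ptw =>
      intro s hs
      have hs0 : (0:ℝ) < s := ht.trans hs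
      have hq : (1:ℝ)/4 * s ^ (-(7:ℝ)/4) = s ^ (-(3:ℝ)/4) / (4*s) := by
        rw [show (-(7:ℝ)/4) = (-(3:ℝ)/4) + (-1:ℝ) by norm_num, Real.rpow_add hs0,
          Real.rpow_neg_one]
        field_simp
      rw [hq]
      exact div_le_div_of_nonneg_left (Real.rpow_nonneg hs0.le _) (by linarith)
        (by nlinarith [sq_nonneg x])
    have hval : ∫ s in Ioi t, (1/4 : ℝ) * s ^ (-(7:ℝ)/4) = (1/3) * t ^ (-(3:ℝ)/4) := by
      rw [integral_const_mul, integral_Ioi_rpow_of_lt (by norm_num : -(7:ℝ)/4 < -1) ht,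
        show (-(7:ℝ)/4 + 1) = -(3:ℝ)/4 by norm_num]
      ring
    have hy1 : x^2/t ≤ 1 := (div_le_one ht).mpr hxt
    have hP2 : (1:ℝ)/2 ≤ (1+x^2/t) ^ (-(3:ℝ)/4) := by
      have hApos : (0:ℝ) < (1+x^2/t) ^ ((3:ℝ)/4) := Real.rpow_pos_of_pos (by positivity) _
      have hA : (1+x^2/t) ^ ((3:ℝ)/4) ≤ 2 ^ ((3:ℝ)/4) :=
        Real.rpow_le_rpow (by positivity) (by linarith) (by norm_num)
      have hB : (2:ℝ) ^ ((3:ℝ)/4) ≤ 2 := by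
        have := Real.rpow_le_rpow_of_exponent_le (show (1:ℝ) ≤ 2 by norm_num)
          (show (3:ℝ)/4 ≤ 1 by norm_num)
        rwa [Real.rpow_one] at this
      rw [rpow_neg34 (by positivity : (0:ℝ) ≤ 1+x^2/t)]
      calc (1:ℝ)/2 = (2:ℝ)⁻¹ := by norm_num
      _ ≤ ((1+x^2/t) ^ ((3:ℝ)/4))⁻¹ := inv_anti₀ hApos (by linarith)
    have hTP : t ^ (-(3:ℝ)/4) * (1/2) ≤ t ^ (-(3:ℝ)/4) * (1+x^2/t) ^ (-(3:ℝ)/4) :=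
      mul_le_mul_of_nonneg_left hP2 hT.le
    have hK2TP : (0:ℝ) ≤ 2*K2 * (t ^ (-(3:ℝ)/4) * (1+x^2/t) ^ (-(3:ℝ)/4)) := by
      have := K2_nonneg
      positivity
    have hexpand : (1 + 2*K2) * (t ^ (-(3:ℝ)/4) * (1+x^2/t) ^ (-(3:ℝ)/4))
        = t ^ (-(3:ℝ)/4) * (1+x^2/t) ^ (-(3:ℝ)/4)
          + 2*K2 * (t ^ (-(3:ℝ)/4) * (1+x^2/t) ^ (-(3:ℝ)/4)) := by ring
    rw [hexpand]
    rw [hval] at hle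
    linarith
  · have hx2 : (0:ℝ) < x^2 := ht.trans hxt
    have hmono : ∫ s in Ioi t, s ^ (-(3:ℝ)/4) / (4*s+x^2)
        ≤ ∫ s in Ioi (0:ℝ), s ^ (-(3:ℝ)/4) / (4*s+x^2) := by
      apply setIntegral_mono_set (integrableOn_hh_Ioi0 hx2)
      · filter_upwards [ae_restrict_mem measurableSet_Ioi] with s hs
        have hs0 : (0:ℝ) < s := hs
        exact div_nonneg (Real.rpow_nonneg hs0.le _) (by nlinarith)
      · exact HasSubset.Subset.eventuallyLE (Ioi_subset_Ioi ht.le)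
    rw [Jscale hx2] at hmono
    have hy1 : (1:ℝ) ≤ x^2/t := (one_le_div ht).mpr hxt.le
    have hxy : (x^2) ^ (-(3:ℝ)/4) ≤ 2 * (t ^ (-(3:ℝ)/4) * (1+x^2/t) ^ (-(3:ℝ)/4)) := by
      have hxx : x^2 = t * (x^2/t) := by field_simp
      have hyle := rpow34_y_le hy1
      calc (x^2) ^ (-(3:ℝ)/4) = (t * (x^2/t)) ^ (-(3:ℝ)/4) := by rw [← hxx]
      _ = t ^ (-(3:ℝ)/4) * (x^2/t) ^ (-(3:ℝ)/4) := Real.mul_rpow ht.le (by positivity)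
      _ ≤ t ^ (-(3:ℝ)/4) * (2 * (1+x^2/t) ^ (-(3:ℝ)/4)) :=
            mul_le_mul_of_nonneg_left hyle hT.le
      _ = 2 * (t ^ (-(3:ℝ)/4) * (1+x^2/t) ^ (-(3:ℝ)/4)) := by ring
    have hfin : (x^2) ^ (-(3:ℝ)/4) * K2
        ≤ (1 + 2*K2) * (t ^ (-(3:ℝ)/4) * (1+x^2/t) ^ (-(3:ℝ)/4)) := by
      have h1 := mul_le_mul_of_nonneg_right hxy K2_nonneg
      have h2 : (0:ℝ) ≤ t ^ (-(3:ℝ)/4) * (1+x^2/t) ^ (-(3:ℝ)/4) := by positivity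
      nlinarith [h1, h2, K2_nonneg]
    linarith

end SqrtDAux2

noncomputable section SqrtDAux3

lemma integral_ofReal'' {X : Type*} [MeasurableSpace X] {μ : Measure X} (f : X → ℝ) :
    ∫ x, ((f x : ℝ) : ℂ) ∂μ = ((∫ x, f x ∂μ : ℝ) : ℂ) :=
  integral_ofReal

/-! ### Fourier side -/

lemma char_norm (r : ℝ) : ‖Complex.exp ((r:ℝ) * Complex.I)‖ = 1 := by
  rw [Complex.norm_exp]
  simp [Complex.mul_re]

lemma char_cont (x : ℝ) :
    Continuous (fun θ : ℝ => Complex.exp ((2*π*x*θ : ℝ) * Complex.I)) := by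
  apply Complex.continuous_exp.comp
  exact (Complex.continuous_ofReal.comp (continuous_const.mul continuous_id)).mul
    continuous_const

lemma gauss_exp_eq (c : ℝ) :
    (fun θ:ℝ => Real.exp (-4*π^2*c*θ^2)) = fun θ:ℝ => Real.exp (-(4*π^2*c)*θ^2) := by
  funext θ; congr 1; ring

lemma gauss_int {c : ℝ} (hc : 0 < c) :
    Integrable (fun θ:ℝ => Real.exp (-4*π^2*c*θ^2)) := by
  rw [gauss_exp_eq]
  exact integrable_exp_neg_mul_sq (by positivity)

lemma gauss_val {c : ℝ} (hc : 0 < c) :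
    ∫ θ:ℝ, Real.exp (-4*π^2*c*θ^2) = Real.sqrt (π/(4*π^2*c)) := by
  rw [gauss_exp_eq, integral_gaussian]

lemma gauss_char_integrable {c : ℝ} (hc : 0 < c) (x : ℝ) :
    Integrable (fun θ:ℝ => ((Real.exp (-4*π^2*c*θ^2) : ℝ):ℂ) *
      Complex.exp ((2*π*x*θ : ℝ) * Complex.I)) := by
  have hg : Integrable (fun θ:ℝ => ((Real.exp (-4*π^2*c*θ^2) : ℝ):ℂ)) :=
    (gauss_int hc).ofReal
  have hb := Integrable.bdd_mul hg ((char_cont x).aestronglyMeasurable)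
    (Filter.Eventually.of_forall (fun θ => le_of_eq (char_norm _)))
  exact hb.congr (Filter.Eventually.of_forall (fun θ => mul_comm _ _))

lemma gaussFT {τ : ℝ} (hτ : 0 < τ) (x : ℝ) :
    ∫ θ : ℝ, ((Real.exp (-4*π^2*τ*θ^2) : ℝ) : ℂ) * Complex.exp ((2*π*x*θ : ℝ) * Complex.I)
      = ((Real.sqrt (π/(4*π^2*τ)) * Real.exp (-(x^2)/(4*τ)) : ℝ) : ℂ) := by
  have hb0 : (0:ℝ) < 4*π^2*τ := by positivity
  have hbC : 0 < (((4*π^2*τ : ℝ) : ℂ)).re := by rw [Complex.ofReal_re]; exact hb0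
  have h := fourierIntegral_gaussian hbC (((2*π*x : ℝ) : ℂ))
  have hpt : ∀ θ:ℝ, Complex.exp (Complex.I * ((2*π*x : ℝ):ℂ) * (θ:ℂ))
      * Complex.exp (-(((4*π^2*τ:ℝ):ℂ)) * (θ:ℂ)^2)
      = ((Real.exp (-4*π^2*τ*θ^2) : ℝ) : ℂ) * Complex.exp ((2*π*x*θ : ℝ) * Complex.I) := by
    intro θ
    rw [mul_comm]
    have e1 : Complex.exp (-(((4*π^2*τ:ℝ):ℂ)) * (θ:ℂ)^2)
        = ((Real.exp (-4*π^2*τ*θ^2) : ℝ) : ℂ) := by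
      rw [Complex.ofReal_exp]
      congr 1
      push_cast
      ring
    have e2 : Complex.exp (Complex.I * ((2*π*x : ℝ):ℂ) * (θ:ℂ))
        = Complex.exp ((2*π*x*θ : ℝ) * Complex.I) := by
      congr 1
      push_cast
      ring
    rw [e1, e2]
  rw [show (fun θ:ℝ => Complex.exp (Complex.I * ((2*π*x : ℝ):ℂ) * (θ:ℂ))
      * Complex.exp (-(((4*π^2*τ:ℝ):ℂ)) * (θ:ℂ)^2))
    = fun θ:ℝ => ((Real.exp (-4*π^2*τ*θ^2) : ℝ) : ℂ)
      * Complex.exp ((2*π*x*θ : ℝ) * Complex.I) from funext hpt] at h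
  rw [h]
  have hdiv : ((π:ℝ):ℂ) / ((4*π^2*τ:ℝ):ℂ) = (((π/(4*π^2*τ)) : ℝ) : ℂ) := by
    push_cast
    ring
  rw [hdiv]
  rw [show ((1:ℂ)/2) = ((1/2 : ℝ) : ℂ) by norm_num]
  rw [← Complex.ofReal_cpow (le_of_lt (by positivity : (0:ℝ) < π/(4*π^2*τ)))]
  have hreal : (-(x^2)/(4*τ) : ℝ) = -(2*π*x)^2/(4*(4*π^2*τ)) := by
    rw [div_eq_div_iff (by positivity : (0:ℝ) < 4*τ).ne' (by positivity : (0:ℝ) < 4*(4*π^2*τ)).ne']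
    ring
  have hexp2 : -(((2*π*x:ℝ)):ℂ)^2 / (4*(((4*π^2*τ:ℝ)):ℂ)) = (((-(x^2)/(4*τ)) : ℝ) : ℂ) := by
    rw [hreal]
    push_cast
    ring
  rw [hexp2, ← Complex.ofReal_exp, ← Complex.ofReal_mul]
  rw [Real.sqrt_eq_rpow]

/-! ### Fubini setup -/

def Fc (t x : ℝ) (p : ℝ × ℝ) : ℂ :=
  ((p.1 ^ (-(5:ℝ)/4) * (Real.exp (-4*π^2*t*p.2^2) - Real.exp (-4*π^2*(t+p.1)*p.2^2)) : ℝ) : ℂ) *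
    Complex.exp ((2*π*x*p.2 : ℝ) * Complex.I)

lemma Fc_contOn (t x : ℝ) :
    ContinuousOn (Fc t x) (Ioi (0:ℝ) ×ˢ (univ : Set ℝ)) := by
  have h1 : ContinuousOn (fun p : ℝ×ℝ => p.1 ^ (-(5:ℝ)/4)) (Ioi (0:ℝ) ×ˢ (univ : Set ℝ)) := by
    intro p hp
    have hp1 : p.1 ≠ 0 := (mem_Ioi.mp hp.1).ne'
    exact ((Real.continuousAt_rpow_const p.1 _ (Or.inl hp1)).comp
      continuous_fst.continuousAt).continuousWithinAt
  have h2 : Continuous (fun p : ℝ×ℝ => Real.exp (-4*π^2*t*p.2^2)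
      - Real.exp (-4*π^2*(t+p.1)*p.2^2)) := by
    apply Continuous.sub
    · exact Real.continuous_exp.comp (continuous_const.mul (continuous_snd.pow 2))
    · exact Real.continuous_exp.comp
        (((continuous_const.mul (continuous_const.add continuous_fst)).mul
          (continuous_snd.pow 2)))
  have h3 : Continuous (fun p : ℝ×ℝ => Complex.exp ((2*π*x*p.2 : ℝ) * Complex.I)) := by
    apply Complex.continuous_exp.comp
    exact (Complex.continuous_ofReal.comp (continuous_const.mul continuous_snd)).mul
      continuous_const
  exact (Complex.continuous_ofReal.comp_continuousOn (h1.mul h2.continuousOn)).mul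
    h3.continuousOn

lemma Fc_aesm (t x : ℝ) :
    AEStronglyMeasurable (Fc t x) ((volume.restrict (Ioi 0)).prod volume) := by
  have hmeq : (volume.restrict (Ioi (0:ℝ))).prod (volume : Measure ℝ)
      = ((volume : Measure ℝ).prod (volume : Measure ℝ)).restrict
          ((Ioi 0) ×ˢ (univ : Set ℝ)) := by
    rw [← Measure.prod_restrict, Measure.restrict_univ]
  rw [hmeq]
  exact (Fc_contOn t x).aestronglyMeasurable (measurableSet_Ioi.prod MeasurableSet.univ)

lemma Fc_norm_int {t : ℝ} (ht : 0 < t) (x : ℝ) {s : ℝ} (hs : 0 < s) :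
    ∫ θ:ℝ, ‖Fc t x (s, θ)‖
      = s ^ (-(5:ℝ)/4) * (Real.sqrt (π/(4*π^2*t)) - Real.sqrt (π/(4*π^2*(t+s)))) := by
  have hts : (0:ℝ) < t + s := by linarith
  have hnorm : ∀ θ:ℝ, ‖Fc t x (s,θ)‖
      = s ^ (-(5:ℝ)/4) * (Real.exp (-4*π^2*t*θ^2) - Real.exp (-4*π^2*(t+s)*θ^2)) := by
    intro θ
    have hord : (0:ℝ) ≤ 4*π^2*s*θ^2 := by positivity
    have hee : Real.exp (-4*π^2*(t+s)*θ^2) ≤ Real.exp (-4*π^2*t*θ^2) := by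
      apply Real.exp_le_exp.mpr
      nlinarith [hord]
    show ‖((s ^ (-(5:ℝ)/4) * (Real.exp (-4*π^2*t*θ^2) - Real.exp (-4*π^2*(t+s)*θ^2)) : ℝ) : ℂ)
        * Complex.exp ((2*π*x*θ : ℝ) * Complex.I)‖ = _
    rw [norm_mul, char_norm, mul_one, Complex.norm_real, Real.norm_eq_abs,
      abs_of_nonneg (mul_nonneg (Real.rpow_nonneg hs.le _) (by linarith))]
  simp only [hnorm]
  rw [integral_const_mul, integral_sub (gauss_int ht) (gauss_int hts),
    gauss_val ht, gauss_val hts]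

def mM (t : ℝ) : ℝ → ℝ := fun s =>
  min (Real.sqrt (π/(4*π^2*t)) * s ^ (-(5:ℝ)/4)) ((2*t*Real.sqrt t)⁻¹ * s ^ (-(1:ℝ)/4))

lemma mM_integrable {t : ℝ} (ht : 0 < t) : IntegrableOn (mM t) (Ioi 0) := by
  have h1 : IntegrableOn (mM t) (Ioc 0 t) := by
    apply Integrable.mono' ((integrableOn_rpow_Ioc (p := -(1:ℝ)/4)
      (by norm_num) ht).const_mul ((2*t*Real.sqrt t)⁻¹))
    · apply ContinuousOn.aestronglyMeasurable ?_ measurableSet_Ioc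
      exact (continuousOn_const.mul (contOn_rpow _ (fun u hu => hu.1.ne'))).inf
        (continuousOn_const.mul (contOn_rpow _ (fun u hu => hu.1.ne')))
    · filter_upwards [ae_restrict_mem measurableSet_Ioc] with s hs
      have hs0 : (0:ℝ) < s := hs.1
      have hnn : 0 ≤ mM t s :=
        le_min (mul_nonneg (Real.sqrt_nonneg _) (Real.rpow_nonneg hs0.le _))
          (mul_nonneg (by positivity) (Real.rpow_nonneg hs0.le _))
      rw [Real.norm_eq_abs, abs_of_nonneg hnn]
      exact min_le_right _ _
  have h2 : IntegrableOn (mM t) (Ioi t) := by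
    apply Integrable.mono' ((integrableOn_Ioi_rpow_of_lt
      (by norm_num : -(5:ℝ)/4 < -1) ht).const_mul (Real.sqrt (π/(4*π^2*t))))
    · apply ContinuousOn.aestronglyMeasurable ?_ measurableSet_Ioi
      exact (continuousOn_const.mul (contOn_rpow _ (fun u hu => (ht.trans hu).ne'))).inf
        (continuousOn_const.mul (contOn_rpow _ (fun u hu => (ht.trans hu).ne')))
    · filter_upwards [ae_restrict_mem measurableSet_Ioi] with s hs
      have hs0 : (0:ℝ) < s := ht.trans hs
      have hnn : 0 ≤ mM t s :=
        le_min (mul_nonneg (Real.sqrt_nonneg _) (Real.rpow_nonneg hs0.le _))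
          (mul_nonneg (by positivity) (Real.rpow_nonneg hs0.le _))
      rw [Real.norm_eq_abs, abs_of_nonneg hnn]
      exact min_le_left _ _
  have h := h1.union h2
  rwa [Ioc_union_Ioi_eq_Ioi ht.le] at h

lemma sqrt_diff_nonneg {t s : ℝ} (ht : 0 < t) (hs : 0 < s) :
    0 ≤ Real.sqrt (π/(4*π^2*t)) - Real.sqrt (π/(4*π^2*(t+s))) := by
  have hts : (0:ℝ) < t + s := by linarith
  rw [sqrt_piv ht, sqrt_piv hts]
  have h : (Real.sqrt (t+s))⁻¹ ≤ (Real.sqrt t)⁻¹ :=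
    inv_anti₀ (Real.sqrt_pos.mpr ht) (Real.sqrt_le_sqrt (by linarith))
  nlinarith [c0_nonneg]

lemma Fc_integrable {t : ℝ} (ht : 0 < t) (x : ℝ) :
    Integrable (Fc t x) ((volume.restrict (Ioi 0)).prod volume) := by
  rw [integrable_prod_iff (Fc_aesm t x)]
  constructor
  · filter_upwards [ae_restrict_mem measurableSet_Ioi] with s hs
    have hs0 : (0:ℝ) < s := hs
    have hts : (0:ℝ) < t + s := by linarith
    have e : (fun θ => Fc t x (s, θ)) = fun θ =>
        ((s ^ (-(5:ℝ)/4) : ℝ):ℂ) *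
          (((Real.exp (-4*π^2*t*θ^2) : ℝ):ℂ) * Complex.exp ((2*π*x*θ : ℝ) * Complex.I)
           - ((Real.exp (-4*π^2*(t+s)*θ^2) : ℝ):ℂ)
             * Complex.exp ((2*π*x*θ : ℝ) * Complex.I)) := by
      funext θ
      show ((s ^ (-(5:ℝ)/4) * (Real.exp (-4*π^2*t*θ^2)
          - Real.exp (-4*π^2*(t+s)*θ^2)) : ℝ) : ℂ)
          * Complex.exp ((2*π*x*θ : ℝ) * Complex.I) = _
      push_cast
      ring
    rw [e]
    exact ((gauss_char_integrable ht x).sub (gauss_char_integrable hts x)).const_mul _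
  · apply Integrable.mono' (mM_integrable ht) (((Fc_aesm t x).norm).integral_prod_right')
    filter_upwards [ae_restrict_mem measurableSet_Ioi] with s hs
    have hs0 : (0:ℝ) < s := hs
    have hts : (0:ℝ) < t + s := by linarith
    rw [Real.norm_eq_abs, abs_of_nonneg (integral_nonneg (fun θ => norm_nonneg _)),
      Fc_norm_int ht x hs0]
    apply le_min
    · have hq : Real.sqrt (π/(4*π^2*t)) - Real.sqrt (π/(4*π^2*(t+s)))
          ≤ Real.sqrt (π/(4*π^2*t)) := by
        linarith [Real.sqrt_nonneg (π/(4*π^2*(t+s)))]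
      calc s ^ (-(5:ℝ)/4) * (Real.sqrt (π/(4*π^2*t)) - Real.sqrt (π/(4*π^2*(t+s))))
          ≤ s ^ (-(5:ℝ)/4) * Real.sqrt (π/(4*π^2*t)) :=
            mul_le_mul_of_nonneg_left hq (Real.rpow_nonneg hs0.le _)
      _ = Real.sqrt (π/(4*π^2*t)) * s ^ (-(5:ℝ)/4) := mul_comm _ _
    · have hdiff : Real.sqrt (π/(4*π^2*t)) - Real.sqrt (π/(4*π^2*(t+s)))
          ≤ s/(2*t*Real.sqrt t) := by
        rw [sqrt_piv ht, sqrt_piv hts]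
        have hnn0 : 0 ≤ (Real.sqrt t)⁻¹ - (Real.sqrt (t+s))⁻¹ := by
          have : (Real.sqrt (t+s))⁻¹ ≤ (Real.sqrt t)⁻¹ :=
            inv_anti₀ (Real.sqrt_pos.mpr ht) (Real.sqrt_le_sqrt (by linarith))
          linarith
        have h1 : c0 * ((Real.sqrt t)⁻¹ - (Real.sqrt (t+s))⁻¹)
            ≤ 1 * (s/(2*t*Real.sqrt t)) :=
          mul_le_mul c0_le_one (inv_sqrt_diff ht hs0.le) hnn0 zero_le_one
        calc c0 * (Real.sqrt t)⁻¹ - c0 * (Real.sqrt (t+s))⁻¹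
            = c0*((Real.sqrt t)⁻¹ - (Real.sqrt (t+s))⁻¹) := by ring
        _ ≤ 1 * (s/(2*t*Real.sqrt t)) := h1
        _ = s/(2*t*Real.sqrt t) := one_mul _
      calc s ^ (-(5:ℝ)/4) * (Real.sqrt (π/(4*π^2*t)) - Real.sqrt (π/(4*π^2*(t+s))))
          ≤ s ^ (-(5:ℝ)/4) * (s/(2*t*Real.sqrt t)) :=
            mul_le_mul_of_nonneg_left hdiff (Real.rpow_nonneg hs0.le _)
      _ = (2*t*Real.sqrt t)⁻¹ * (s ^ (-(5:ℝ)/4) * s) := by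
            rw [div_eq_mul_inv]; ring
      _ = (2*t*Real.sqrt t)⁻¹ * s ^ (-(1:ℝ)/4) := by rw [glue4 hs0]

lemma inner_theta {t s : ℝ} (ht : 0 < t) (hs : 0 < s) (x : ℝ) :
    ∫ θ:ℝ, Fc t x (s, θ)
      = ((s ^ (-(5:ℝ)/4) * (Qk t x - Qk (t+s) x) : ℝ) : ℂ) := by
  have hts : (0:ℝ) < t + s := by linarith
  have e : (fun θ:ℝ => Fc t x (s, θ)) = fun θ =>
      ((s ^ (-(5:ℝ)/4) : ℝ):ℂ) *
        (((Real.exp (-4*π^2*t*θ^2) : ℝ):ℂ) * Complex.exp ((2*π*x*θ : ℝ) * Complex.I)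
         - ((Real.exp (-4*π^2*(t+s)*θ^2) : ℝ):ℂ)
           * Complex.exp ((2*π*x*θ : ℝ) * Complex.I)) := by
    funext θ
    show ((s ^ (-(5:ℝ)/4) * (Real.exp (-4*π^2*t*θ^2)
        - Real.exp (-4*π^2*(t+s)*θ^2)) : ℝ) : ℂ)
        * Complex.exp ((2*π*x*θ : ℝ) * Complex.I) = _
    push_cast
    ring
  rw [e, integral_const_mul,
    integral_sub (gauss_char_integrable ht x) (gauss_char_integrable hts x),
    gaussFT ht x, gaussFT hts x]
  show _ = ((s ^ (-(5:ℝ)/4) * (Qk t x - Qk (t+s) x) : ℝ) : ℂ)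
  unfold Qk
  push_cast
  ring

lemma Rint_integrable {t : ℝ} (ht : 0 < t) (x : ℝ) :
    IntegrableOn (fun s => s ^ (-(5:ℝ)/4) * (Qk t x - Qk (t+s) x)) (Ioi 0) := by
  have h := (Fc_integrable ht x).integral_prod_left
  have h2 := h.re
  apply h2.congr
  filter_upwards [ae_restrict_mem measurableSet_Ioi] with s hs
  rw [inner_theta ht hs x]
  simp

lemma sqrtD_repr {t : ℝ} (ht : 0 < t) (x : ℝ) :
    ((4*π^2) ^ ((1:ℝ)/4) * Kc) * sqrtDheat t x
      = ∫ s in Ioi (0:ℝ), s ^ (-(5:ℝ)/4) * (Qk t x - Qk (t+s) x) := by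
  have hpt : ∀ θ : ℝ,
      (((4*π^2) ^ ((1:ℝ)/4) * Kc : ℝ):ℂ) *
        (((|θ| ^ ((1:ℝ)/2) * Real.exp (-4*π^2*t*θ^2) : ℝ) : ℂ) *
          Complex.exp ((2*π*x*θ : ℝ) * Complex.I))
      = ∫ s in Ioi (0:ℝ), Fc t x (s, θ) := by
    intro θ
    have h1 : ∫ s in Ioi (0:ℝ), Fc t x (s, θ)
        = ((∫ s in Ioi (0:ℝ), s ^ (-(5:ℝ)/4) *
            (Real.exp (-4*π^2*t*θ^2) - Real.exp (-4*π^2*(t+s)*θ^2)) : ℝ) : ℂ)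
          * Complex.exp ((2*π*x*θ : ℝ) * Complex.I) := by
      rw [show (fun s => Fc t x (s, θ)) = fun s =>
          ((s ^ (-(5:ℝ)/4) * (Real.exp (-4*π^2*t*θ^2)
            - Real.exp (-4*π^2*(t+s)*θ^2)) : ℝ) : ℂ)
            * Complex.exp ((2*π*x*θ : ℝ) * Complex.I) from rfl]
      rw [integral_mul_const, integral_ofReal'']
    rw [h1, symbol ht θ]
    push_cast
    ring
  have hswap : (∫ θ:ℝ, ∫ s in Ioi (0:ℝ), Fc t x (s, θ))
      = ∫ s in Ioi (0:ℝ), ∫ θ:ℝ, Fc t x (s, θ) :=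
    (MeasureTheory.integral_integral_swap (μ := volume.restrict (Ioi 0)) (ν := volume)
      (f := fun s θ => Fc t x (s, θ)) (Fc_integrable ht x)).symm
  have hinner : (∫ s in Ioi (0:ℝ), ∫ θ:ℝ, Fc t x (s, θ))
      = ((∫ s in Ioi (0:ℝ), s ^ (-(5:ℝ)/4) * (Qk t x - Qk (t+s) x) : ℝ) : ℂ) := by
    rw [← integral_ofReal'']
    apply setIntegral_congr_fun measurableSet_Ioi
    intro s hs
    exact inner_theta ht hs x
  have hmain : (((4*π^2) ^ ((1:ℝ)/4) * Kc : ℝ):ℂ) *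
      (∫ θ:ℝ, ((|θ| ^ ((1:ℝ)/2) * Real.exp (-4*π^2*t*θ^2) : ℝ) : ℂ)
        * Complex.exp ((2*π*x*θ : ℝ) * Complex.I))
      = ((∫ s in Ioi (0:ℝ), s ^ (-(5:ℝ)/4) * (Qk t x - Qk (t+s) x) : ℝ) : ℂ) := by
    rw [← integral_const_mul,
      show (fun θ:ℝ => (((4*π^2) ^ ((1:ℝ)/4) * Kc : ℝ):ℂ) *
        (((|θ| ^ ((1:ℝ)/2) * Real.exp (-4*π^2*t*θ^2) : ℝ) : ℂ)
          * Complex.exp ((2*π*x*θ : ℝ) * Complex.I)))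
      = fun θ:ℝ => ∫ s in Ioi (0:ℝ), Fc t x (s, θ) from funext hpt, hswap, hinner]
  have hre := congrArg Complex.re hmain
  show ((4*π^2) ^ ((1:ℝ)/4) * Kc) *
      (∫ θ : ℝ, ((|θ| ^ ((1:ℝ)/2) * Real.exp (-4 * π ^ 2 * t * θ ^ 2) : ℝ) : ℂ) *
        Complex.exp ((2 * π * x * θ : ℝ) * Complex.I)).re = _
  simpa [Complex.ofReal_re] using hre

/-! ### Final estimates -/

lemma region1int {t x : ℝ} (ht : 0 < t) :
    ∫ s in Ioc (0:ℝ) t, |s ^ (-(5:ℝ)/4) * (Qk t x - Qk (t+s) x)|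
      ≤ 576 * (t ^ (-(3:ℝ)/4) * (1+x^2/t) ^ (-(3:ℝ)/4)) := by
  set P := (1+x^2/t) ^ (-(3:ℝ)/4) with hP_def
  have hP : (0:ℝ) ≤ P := Real.rpow_nonneg (by positivity) _
  have hintf : IntegrableOn (fun s => |s ^ (-(5:ℝ)/4) * (Qk t x - Qk (t+s) x)|) (Ioc 0 t) :=
    ((Rint_integrable ht x).mono_set Ioc_subset_Ioi_self).abs
  have hmaj : IntegrableOn
      (fun s : ℝ => (432 * ((t*Real.sqrt t)⁻¹ * P)) * s ^ (-(1:ℝ)/4)) (Ioc 0 t) :=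
    (integrableOn_rpow_Ioc (by norm_num) ht).const_mul _
  have hle := setIntegral_mono_on hintf hmaj measurableSet_Ioc ?ptw
  case ptw =>
    intro s hs
    have hs0 : (0:ℝ) < s := hs.1
    rw [abs_mul, abs_of_nonneg (Real.rpow_nonneg hs0.le _)]
    calc s ^ (-(5:ℝ)/4) * |Qk t x - Qk (t+s) x|
        ≤ s ^ (-(5:ℝ)/4) * (432 * s * (t*Real.sqrt t)⁻¹ * P) :=
          mul_le_mul_of_nonneg_left (region1pt ht hs0 hs.2) (Real.rpow_nonneg hs0.le _)
    _ = (432 * ((t*Real.sqrt t)⁻¹ * P)) * (s ^ (-(5:ℝ)/4) * s) := by ring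
    _ = (432 * ((t*Real.sqrt t)⁻¹ * P)) * s ^ (-(1:ℝ)/4) := by rw [glue4 hs0]
  have hval : ∫ s in Ioc (0:ℝ) t, (432 * ((t*Real.sqrt t)⁻¹ * P)) * s ^ (-(1:ℝ)/4)
      = (432 * ((t*Real.sqrt t)⁻¹ * P)) * (t ^ ((3:ℝ)/4) / (3/4)) := by
    rw [integral_const_mul, integral_rpow_Ioc (by norm_num) ht,
      show (-(1:ℝ)/4 + 1) = (3:ℝ)/4 by norm_num]
  rw [hval] at hle
  have hid : 432 * ((t*Real.sqrt t)⁻¹ * P) * (t ^ ((3:ℝ)/4) / (3/4))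
      = 576 * (((t*Real.sqrt t)⁻¹ * t ^ ((3:ℝ)/4)) * P) := by ring
  rw [hid, glue2 ht] at hle
  exact hle

lemma region2int {t x : ℝ} (ht : 0 < t) :
    ∫ s in Ioi t, |s ^ (-(5:ℝ)/4) * (Qk t x - Qk (t+s) x)|
      ≤ (24 + 16*K2) * (t ^ (-(3:ℝ)/4) * (1+x^2/t) ^ (-(3:ℝ)/4)) := by
  set P := (1+x^2/t) ^ (-(3:ℝ)/4) with hP_def
  have hP : (0:ℝ) ≤ P := Real.rpow_nonneg (by positivity) _
  have hT : (0:ℝ) < t ^ (-(3:ℝ)/4) := Real.rpow_pos_of_pos ht _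
  have hintf : IntegrableOn (fun s => |s ^ (-(5:ℝ)/4) * (Qk t x - Qk (t+s) x)|) (Ioi t) :=
    ((Rint_integrable ht x).mono_set (Ioi_subset_Ioi ht.le)).abs
  have hrpowInt : IntegrableOn (fun s : ℝ => Qk t x * s ^ (-(5:ℝ)/4)) (Ioi t) :=
    (integrableOn_Ioi_rpow_of_lt (by norm_num : -(5:ℝ)/4 < -1) ht).const_mul _
  have hhInt : IntegrableOn (fun s : ℝ => 8 * (s ^ (-(3:ℝ)/4) / (4*s+x^2))) (Ioi t) :=
    (integrableOn_hh_Ioi (sq_nonneg x) ht).const_mul _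
  have hmaj : IntegrableOn (fun s : ℝ => Qk t x * s ^ (-(5:ℝ)/4)
      + 8 * (s ^ (-(3:ℝ)/4) / (4*s+x^2))) (Ioi t) := hrpowInt.add hhInt
  have hle := setIntegral_mono_on hintf hmaj measurableSet_Ioi ?ptw
  case ptw =>
    intro s hs
    have hs0 : (0:ℝ) < s := ht.trans hs
    have habs2 : |Qk t x - Qk (t+s) x| ≤ Qk t x + Qk (t+s) x := by
      have h1 := Qk_nonneg t x
      have h2 := Qk_nonneg (t+s) x
      rw [abs_le]
      constructor <;> nlinarith
    rw [abs_mul, abs_of_nonneg (Real.rpow_nonneg hs0.le _)]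
    calc s ^ (-(5:ℝ)/4) * |Qk t x - Qk (t+s) x|
        ≤ s ^ (-(5:ℝ)/4) * (Qk t x + Qk (t+s) x) :=
          mul_le_mul_of_nonneg_left habs2 (Real.rpow_nonneg hs0.le _)
    _ ≤ s ^ (-(5:ℝ)/4) * (Qk t x + 8 * Real.sqrt s / (4*s + x^2)) := by
          apply mul_le_mul_of_nonneg_left ?_ (Real.rpow_nonneg hs0.le _)
          linarith [region2pt (x := x) ht hs]
    _ = Qk t x * s ^ (-(5:ℝ)/4) + 8 * ((s ^ (-(5:ℝ)/4) * Real.sqrt s) / (4*s+x^2)) := by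
          ring
    _ = Qk t x * s ^ (-(5:ℝ)/4) + 8 * (s ^ (-(3:ℝ)/4) / (4*s+x^2)) := by
          rw [glue5 hs0]
  have hsplit : ∫ s in Ioi t, (Qk t x * s ^ (-(5:ℝ)/4) + 8 * (s ^ (-(3:ℝ)/4) / (4*s+x^2)))
      = Qk t x * (∫ s in Ioi t, s ^ (-(5:ℝ)/4))
        + 8 * ∫ s in Ioi t, s ^ (-(3:ℝ)/4) / (4*s+x^2) := by
    rw [integral_add hrpowInt hhInt, integral_const_mul, integral_const_mul]
  have hrval : ∫ s in Ioi t, s ^ (-(5:ℝ)/4) = 4 * t ^ (-(1:ℝ)/4) := by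
    rw [integral_Ioi_rpow_of_lt (by norm_num : -(5:ℝ)/4 < -1) ht,
      show (-(5:ℝ)/4 + 1) = -(1:ℝ)/4 by norm_num]
    ring
  have hQt := QtP (x := x) ht
  have hA' : Qk t x * (4 * t ^ (-(1:ℝ)/4)) ≤ 16 * (t ^ (-(3:ℝ)/4) * P) := by
    have h1 : Qk t x * (4 * t ^ (-(1:ℝ)/4))
        ≤ (4 * ((Real.sqrt t)⁻¹ * P)) * (4 * t ^ (-(1:ℝ)/4)) :=
      mul_le_mul_of_nonneg_right hQt (by positivity)
    have h2 : (4 * ((Real.sqrt t)⁻¹ * P)) * (4 * t ^ (-(1:ℝ)/4))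
        = 16 * (((Real.sqrt t)⁻¹ * t ^ (-(1:ℝ)/4)) * P) := by ring
    rw [h2, glue3 ht] at h1
    exact h1
  have hB' := Jbound (x := x) ht
  rw [← hP_def] at hB'
  rw [hsplit, hrval] at hle
  nlinarith [hle, hA', hB', K2_nonneg, hT.le, hP]

lemma Rbound {t : ℝ} (ht : 0 < t) (x : ℝ) :
    |∫ s in Ioi (0:ℝ), s ^ (-(5:ℝ)/4) * (Qk t x - Qk (t+s) x)|
      ≤ (600 + 16*K2) * (t ^ (-(3:ℝ)/4) * (1+x^2/t) ^ (-(3:ℝ)/4)) := by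
  have hint := Rint_integrable ht x
  have h0 : |∫ s in Ioi (0:ℝ), s ^ (-(5:ℝ)/4) * (Qk t x - Qk (t+s) x)|
      ≤ ∫ s in Ioi (0:ℝ), |s ^ (-(5:ℝ)/4) * (Qk t x - Qk (t+s) x)| := by
    exact norm_integral_le_integral_norm
      (μ := volume.restrict (Ioi 0)) (fun s => s ^ (-(5:ℝ)/4) * (Qk t x - Qk (t+s) x))
  have hsplit : ∫ s in Ioi (0:ℝ), |s ^ (-(5:ℝ)/4) * (Qk t x - Qk (t+s) x)|
      = (∫ s in Ioc (0:ℝ) t, |s ^ (-(5:ℝ)/4) * (Qk t x - Qk (t+s) x)|)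
        + ∫ s in Ioi t, |s ^ (-(5:ℝ)/4) * (Qk t x - Qk (t+s) x)| := by
    rw [← Ioc_union_Ioi_eq_Ioi ht.le,
      setIntegral_union (Ioc_disjoint_Ioi le_rfl) measurableSet_Ioi
        ((hint.mono_set Ioc_subset_Ioi_self).abs)
        ((hint.mono_set (Ioi_subset_Ioi ht.le)).abs)]
  have h1 := region1int (x := x) ht
  have h2 := region2int (x := x) ht
  have hTP : (0:ℝ) ≤ t ^ (-(3:ℝ)/4) * (1+x^2/t) ^ (-(3:ℝ)/4) := by positivity
  nlinarith [h0, hsplit, h1, h2, K2_nonneg, hTP]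

end SqrtDAux3

/-- Pointwise bound `|(√𝔇 q_t)(x)| ≲ t^{-3/4} ⟨x/√t⟩^{-3/2}`. -/
theorem stmt_13 :
    ∃ C > (0:ℝ), ∀ t : ℝ, 0 < t → ∀ x : ℝ,
      |sqrtDheat t x| ≤ C * t ^ (-(3:ℝ)/4) * (1 + x ^ 2 / t) ^ (-(3:ℝ)/4) := by
  have hπ4 : (0:ℝ) < (4*π^2) ^ ((1:ℝ)/4) := Real.rpow_pos_of_pos (by positivity) _
  have hk : (0:ℝ) < (4*π^2) ^ ((1:ℝ)/4) * Kc := mul_pos hπ4 Kc_pos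
  refine ⟨(600 + 16*K2) / ((4*π^2) ^ ((1:ℝ)/4) * Kc), ?_, ?_⟩
  · apply div_pos ?_ hk
    nlinarith [K2_nonneg]
  · intro t ht x
    have hrepr := sqrtD_repr ht x
    have hsd : sqrtDheat t x
        = (∫ s in Ioi (0:ℝ), s ^ (-(5:ℝ)/4) * (Qk t x - Qk (t+s) x))
          / ((4*π^2) ^ ((1:ℝ)/4) * Kc) := by
      rw [eq_div_iff hk.ne']
      linear_combination hrepr
    rw [hsd, abs_div, abs_of_pos hk, div_le_iff₀ hk]
    have hR := Rbound ht x
    have hfin : (600 + 16*K2) / ((4*π^2) ^ ((1:ℝ)/4) * Kc) * t ^ (-(3:ℝ)/4)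
        * (1 + x ^ 2 / t) ^ (-(3:ℝ)/4) * ((4*π^2) ^ ((1:ℝ)/4) * Kc)
        = (600 + 16*K2) * (t ^ (-(3:ℝ)/4) * (1 + x^2/t) ^ (-(3:ℝ)/4)) := by
      have hKc : Kc ≠ 0 := Kc_pos.ne'
      field_simp
    rw [hfin]
    exact hR
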